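/- Let Ω ⊆ V be a transitive state space whose inner product ⟪·,·⟫ is GL(Ω)-invariant and whose positive cone V₊ is self-dual with respect to ⟪·,·⟫, and let ω_M be a GL(Ω)-invariant state with ‖ω_M‖ = 1 and ⟪ω_M, ω⟫ = 1 for all ω ∈ Ω. Let F and G be ideal measurements with finite outcome sets A and B, and let M̃ be an approximate joint measurement of (F, G) with marginals M̃^F and M̃^G. Then there exists a state ω ∈ Ω such that D_∞(M̃^F, F) + D_∞(M̃^G, G) ≥ LE(ω^F) + LE(ω^G). -/

import Mathlib

open RealInnerProductSpace

variable {V : Type*} [NormedAddCommGroup V] [InnerProductSpace ℝ V] [FiniteDimensional ℝ V]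

/-- A state space: nonempty compact convex set whose affine hull misses `0` and has
dimension `dim V - 1` (so it spans `V`). -/
def IsStateSpace (Ω : Set V) : Prop :=
  Ω.Nonempty ∧ IsCompact Ω ∧ Convex ℝ Ω ∧ (0 : V) ∉ affineSpan ℝ Ω ∧
    Module.finrank ℝ (vectorSpan ℝ Ω) + 1 = Module.finrank ℝ V

/-- The group `GL(Ω)` of linear bijections preserving `Ω`. -/
def autGroup (Ω : Set V) : Set (V ≃ₗ[ℝ] V) := {T | T '' Ω = Ω}

/-- Transitivity of the action of `GL(Ω)` on the extreme points of `Ω`. -/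
def IsTransitive (Ω : Set V) : Prop :=
  ∀ ω₁ ∈ Set.extremePoints ℝ Ω, ∀ ω₂ ∈ Set.extremePoints ℝ Ω,
    ∃ T ∈ autGroup Ω, T ω₁ = ω₂

/-- The inner product of `V` is invariant under `GL(Ω)`. -/
def InvariantInner (Ω : Set V) : Prop :=
  ∀ T ∈ autGroup Ω, ∀ x y : V, ⟪T x, T y⟫ = ⟪x, y⟫

/-- The positive cone generated by `Ω`. -/
def posCone (Ω : Set V) : Set V := {x | ∃ l : ℝ, ∃ ω ∈ Ω, 0 ≤ l ∧ x = l • ω}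

/-- Self-duality of the positive cone with respect to the inner product of `V`. -/
def SelfDualCone (Ω : Set V) : Prop :=
  posCone Ω = {y | ∀ x ∈ posCone Ω, 0 ≤ ⟪x, y⟫}

/-- An effect on `Ω`. -/
def IsEffect (Ω : Set V) (e : V) : Prop := ∀ ω ∈ Ω, 0 ≤ ⟪e, ω⟫ ∧ ⟪e, ω⟫ ≤ 1

/-- A measurement with outcome set `A`: a family of nonzero effects summing to the
unit effect `ωM`. -/
def IsMeasurement (Ω : Set V) (ωM : V) {A : Type*} [Fintype A] (f : A → V) : Prop :=
  (∀ a, f a ≠ 0 ∧ IsEffect Ω (f a)) ∧ ∑ a, f a = ωM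

/-- An ideal measurement. -/
def IsIdeal (Ω : Set V) (ωM : V) {A : Type*} [Fintype A] (f : A → V) : Prop :=
  IsMeasurement Ω ωM f ∧
    ∃ c : ℝ, 0 < c ∧ (∀ ω ∈ Set.extremePoints ℝ Ω, ‖ω‖ = c) ∧
      ∀ a, ∃ S : Finset V, ↑S ⊆ Set.extremePoints ℝ Ω ∧
        (f a = (c ^ 2)⁻¹ • ∑ ω' ∈ S, ω' ∨ f a = ωM - (c ^ 2)⁻¹ • ∑ ω' ∈ S, ω')

/-- First marginal of a joint measurement. -/
def margF {A B : Type*} [Fintype B] (m : A × B → V) : A → V := fun a => ∑ b, m (a, b)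

/-- Second marginal of a joint measurement. -/
def margG {A B : Type*} [Fintype A] (m : A × B → V) : B → V := fun b => ∑ a, m (a, b)

open Classical in
/-- `∑_{a' : d(a',a) ≤ w/2} ⟪f a', ω⟫`. -/
noncomputable def ballSum {A : Type*} [Fintype A] [MetricSpace A]
    (f : A → V) (ω : V) (a : A) (w : ℝ) : ℝ :=
  ∑ a' ∈ Finset.univ.filter (fun x => dist x a ≤ w / 2), ⟪f a', ω⟫

/-- Overall width of the distribution of `f` on `ω` at confidence level `1 - ε`. -/
noncomputable def overallWidth {A : Type*} [Fintype A] [MetricSpace A]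
    (f : A → V) (ω : V) (ε : ℝ) : ℝ :=
  sInf {w : ℝ | 0 < w ∧ ∃ a : A, 1 - ε ≤ ballSum f ω a w}

/-- Error bar width of `ft` relative to `f`. -/
noncomputable def errorBarWidth (Ω : Set V) {A : Type*} [Fintype A] [MetricSpace A]
    (ft f : A → V) (ε : ℝ) : ℝ :=
  sInf {w : ℝ | 0 < w ∧ ∀ a : A, ∀ ω ∈ Ω, ⟪f a, ω⟫ = 1 → 1 - ε ≤ ballSum ft ω a w}

/-- Werner's measure `D_W(ft, f)`. -/
noncomputable def wernerD (Ω : Set V) {A : Type*} [Fintype A] [MetricSpace A]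
    (ft f : A → V) : ℝ :=
  sSup {d : ℝ | ∃ ω ∈ Ω, ∃ h : A → ℝ, (∀ a₁ a₂ : A, |h a₁ - h a₂| ≤ dist a₁ a₂) ∧
    d = |∑ a, h a * (⟪ft a, ω⟫ - ⟪f a, ω⟫)|}

/-- `l∞` distance `D_∞(ft, f)`. -/
noncomputable def dInfty (Ω : Set V) {A : Type*} (ft f : A → V) : ℝ :=
  sSup {d : ℝ | ∃ ω ∈ Ω, ∃ a : A, d = |⟪ft a, ω⟫ - ⟪f a, ω⟫|}

/-- Minimum localization error `LE(ω^F)`. -/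
noncomputable def locError {A : Type*} [Fintype A] [Nonempty A] (f : A → V) (ω : V) : ℝ :=
  1 - Finset.univ.sup' Finset.univ_nonempty (fun a => ⟪f a, ω⟫)


private lemma cone_inner_nonneg' {Ω : Set V} (hsd : SelfDualCone Ω) {x y : V}
    (hx : x ∈ posCone Ω) (hy : y ∈ posCone Ω) : 0 ≤ ⟪x, y⟫ := by
  rw [hsd] at hy; exact hy x hx

private lemma state_mem_posCone' {Ω : Set V} {ω : V} (hω : ω ∈ Ω) : ω ∈ posCone Ω :=
  ⟨1, ω, hω, zero_le_one, (one_smul ℝ ω).symm⟩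

private lemma effect_decomp' {Ω : Set V} (hsd : SelfDualCone Ω) {ωM : V}
    (hωMunit : ∀ ω ∈ Ω, ⟪ωM, ω⟫ = 1) {e : V}
    (he : ∀ ω ∈ Ω, 0 ≤ ⟪e, ω⟫) : ∃ σ ∈ Ω, 0 ≤ ⟪ωM, e⟫ ∧ e = ⟪ωM, e⟫ • σ := by
  have hmem : e ∈ posCone Ω := by
    rw [hsd]
    rintro x ⟨l, ω, hω, hl, rfl⟩
    rw [real_inner_smul_left, real_inner_comm]
    exact mul_nonneg hl (he ω hω)
  obtain ⟨l, σ, hσ, hl, rfl⟩ := hmem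
  have hval : ⟪ωM, l • σ⟫ = l := by rw [real_inner_smul_right, hωMunit σ hσ, mul_one]
  exact ⟨σ, hσ, by rw [hval]; exact ⟨hl, rfl⟩⟩

private lemma ideal_sharp' {Ω : Set V} (hsd : SelfDualCone Ω) {ωM : V} (hωMΩ : ωM ∈ Ω)
    (hωMunit : ∀ ω ∈ Ω, ⟪ωM, ω⟫ = 1) {c : ℝ} (hc : 0 < c)
    (hnorm : ∀ ω ∈ Set.extremePoints ℝ Ω, ‖ω‖ = c)
    {e : V} (he : IsEffect Ω e) {S : Finset V} (hS : ↑S ⊆ Set.extremePoints ℝ Ω)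
    (hcase : e = (c ^ 2)⁻¹ • ∑ ω' ∈ S, ω' ∨ e = ωM - (c ^ 2)⁻¹ • ∑ ω' ∈ S, ω') :
    ⟪e, e⟫ = ⟪ωM, e⟫ := by
  have hc2 : (0:ℝ) < c ^ 2 := by positivity
  set T := ∑ ω' ∈ S, ω' with hT
  have hmem : ∀ ω' ∈ S, ω' ∈ Ω := fun ω' h => (hS h).1
  have key : ∀ ωj ∈ S, ⟪T, ωj⟫ = c ^ 2 := by
    intro ωj hj
    have hub : (c ^ 2)⁻¹ * ⟪T, ωj⟫ ≤ 1 := by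
      rcases hcase with h | h
      · have := (he ωj (hmem ωj hj)).2
        rw [h, real_inner_smul_left] at this
        exact this
      · have := (he ωj (hmem ωj hj)).1
        rw [h, inner_sub_left, real_inner_smul_left, hωMunit ωj (hmem ωj hj)] at this
        linarith
    have hub' : ⟪T, ωj⟫ ≤ c ^ 2 := by
      have := mul_le_mul_of_nonneg_left hub hc2.le
      rwa [← mul_assoc, mul_inv_cancel₀ hc2.ne', one_mul, mul_one] at this
    have hdiag : ⟪ωj, ωj⟫ = c ^ 2 := by
      rw [real_inner_self_eq_norm_sq, hnorm ωj (hS hj)]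
    have hlb : c ^ 2 ≤ ⟪T, ωj⟫ := by
      rw [hT, sum_inner]
      rw [← hdiag]
      exact Finset.single_le_sum (fun i hi => cone_inner_nonneg' hsd
        (state_mem_posCone' (hmem i hi)) (state_mem_posCone' (hmem ωj hj))) hj
    linarith
  have hTT : ⟪T, T⟫ = (S.card : ℝ) * c ^ 2 := by
    rw [inner_sum]
    calc ∑ ωj ∈ S, ⟪T, ωj⟫ = ∑ ωj ∈ S, c ^ 2 := Finset.sum_congr rfl key
    _ = (S.card : ℝ) * c ^ 2 := by rw [Finset.sum_const, nsmul_eq_mul]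
  have hMT : ⟪ωM, T⟫ = (S.card : ℝ) := by
    rw [inner_sum]
    calc ∑ ωj ∈ S, ⟪ωM, ωj⟫ = ∑ ωj ∈ S, (1:ℝ) :=
          Finset.sum_congr rfl (fun ωj hj => hωMunit ωj (hmem ωj hj))
    _ = (S.card : ℝ) := by simp
  have hTM : ⟪T, ωM⟫ = (S.card : ℝ) := by rw [real_inner_comm]; exact hMT
  have hMM : ⟪ωM, ωM⟫ = 1 := hωMunit ωM hωMΩ
  rcases hcase with h | h
  · rw [h]
    rw [real_inner_smul_left, real_inner_smul_right, real_inner_smul_right, hTT, hMT]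
    field_simp
  · rw [h]
    simp only [inner_sub_left, inner_sub_right, real_inner_smul_left,
      real_inner_smul_right, hTT, hMT, hTM, hMM]
    field_simp
    ring

private lemma dInfty_ge' {Ω : Set V} {A : Type*} [Fintype A] {ft f : A → V}
    (hbdd : ∀ (a : A), ∀ ω ∈ Ω, |⟪ft a, ω⟫ - ⟪f a, ω⟫| ≤ 1)
    {ω : V} (hω : ω ∈ Ω) (a : A) :
    ⟪f a, ω⟫ - ⟪ft a, ω⟫ ≤
      sSup {d : ℝ | ∃ ω ∈ Ω, ∃ a : A, d = |⟪ft a, ω⟫ - ⟪f a, ω⟫|} := by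
  have hb : BddAbove {d : ℝ | ∃ ω ∈ Ω, ∃ a : A, d = |⟪ft a, ω⟫ - ⟪f a, ω⟫|} := by
    refine ⟨1, ?_⟩
    rintro d ⟨ω', hω', a', rfl⟩
    exact hbdd a' ω' hω'
  calc ⟪f a, ω⟫ - ⟪ft a, ω⟫ ≤ |⟪ft a, ω⟫ - ⟪f a, ω⟫| := by
        rw [abs_sub_comm]; exact le_abs_self _
  _ ≤ _ := le_csSup hb ⟨ω, hω, a, rfl⟩

set_option maxHeartbeats 2000000 in
/-- **Theorem 2 (paper).** In a transitive, self-dual GPT, the sum of the `l∞` distances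
of the marginals of an approximate joint measurement from the ideal measurements is
bounded below by the sum of the minimum localization errors on some state. -/
theorem preparation_implies_measurement_lInfty
    {V : Type*} [NormedAddCommGroup V] [InnerProductSpace ℝ V] [FiniteDimensional ℝ V]
    {Ω : Set V} (hΩ : IsStateSpace Ω) (htrans : IsTransitive Ω)
    (hinv : InvariantInner Ω) (hsd : SelfDualCone Ω)
    {ωM : V} (hωMΩ : ωM ∈ Ω) (hωMfix : ∀ T ∈ autGroup Ω, T ωM = ωM)
    (hωMnorm : ‖ωM‖ = 1) (hωMunit : ∀ ω ∈ Ω, ⟪ωM, ω⟫ = 1)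
    {A B : Type*} [Fintype A] [Nonempty A] [Fintype B] [Nonempty B]
    {f : A → V} {g : B → V} (hF : IsIdeal Ω ωM f) (hG : IsIdeal Ω ωM g)
    {m : A × B → V} (hM : IsMeasurement Ω ωM m) :
    ∃ ω ∈ Ω,
      locError f ω + locError g ω ≤
        dInfty Ω (margF m) f + dInfty Ω (margG m) g := by
  classical
  obtain ⟨hFmeas, cF, hcF, hnormF, hSF⟩ := hF
  obtain ⟨hGmeas, cG, hcG, hnormG, hSG⟩ := hG
  set Df := dInfty Ω (margF m) f with hDf
  set Dg := dInfty Ω (margG m) g with hDg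
  have hMM : ⟪ωM, ωM⟫ = 1 := hωMunit ωM hωMΩ
  have hm0 : ∀ p : A × B, ∀ ω ∈ Ω, 0 ≤ ⟪m p, ω⟫ := fun p ω hω => ((hM.1 p).2 ω hω).1
  have hsumtot : ∀ ω ∈ Ω, ∑ p : A × B, ⟪m p, ω⟫ = 1 := by
    intro ω hω
    rw [← sum_inner, hM.2, hωMunit ω hω]
  have hmargF0 : ∀ (a : A), ∀ ω ∈ Ω, 0 ≤ ⟪margF m a, ω⟫ := by
    intro a ω hω
    rw [margF, sum_inner]
    exact Finset.sum_nonneg fun b _ => hm0 (a, b) ω hω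
  have hmargF1 : ∀ (a : A), ∀ ω ∈ Ω, ⟪margF m a, ω⟫ ≤ 1 := by
    intro a ω hω
    rw [margF, sum_inner]
    calc ∑ b, ⟪m (a, b), ω⟫ ≤ ∑ a', ∑ b, ⟪m (a', b), ω⟫ :=
          Finset.single_le_sum (f := fun a' => ∑ b, ⟪m (a', b), ω⟫)
            (fun a' _ => Finset.sum_nonneg fun b _ => hm0 (a', b) ω hω) (Finset.mem_univ a)
    _ = ∑ p : A × B, ⟪m p, ω⟫ := (Fintype.sum_prod_type (f := fun p : A × B => ⟪m p, ω⟫)).symm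
    _ = 1 := hsumtot ω hω
  have hmargG0 : ∀ (b : B), ∀ ω ∈ Ω, 0 ≤ ⟪margG m b, ω⟫ := by
    intro b ω hω
    rw [margG, sum_inner]
    exact Finset.sum_nonneg fun a _ => hm0 (a, b) ω hω
  have hmargG1 : ∀ (b : B), ∀ ω ∈ Ω, ⟪margG m b, ω⟫ ≤ 1 := by
    intro b ω hω
    rw [margG, sum_inner]
    calc ∑ a, ⟪m (a, b), ω⟫ ≤ ∑ b', ∑ a, ⟪m (a, b'), ω⟫ :=
          Finset.single_le_sum (f := fun b' => ∑ a, ⟪m (a, b'), ω⟫)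
            (fun b' _ => Finset.sum_nonneg fun a _ => hm0 (a, b') ω hω) (Finset.mem_univ b)
    _ = ∑ p : A × B, ⟪m p, ω⟫ := (Fintype.sum_prod_type_right (f := fun p : A × B => ⟪m p, ω⟫)).symm
    _ = 1 := hsumtot ω hω
  have hbddF : ∀ (a : A), ∀ ω ∈ Ω, |⟪margF m a, ω⟫ - ⟪f a, ω⟫| ≤ 1 := by
    intro a ω hω
    have h1 := hmargF0 a ω hω
    have h2 := hmargF1 a ω hω
    have h3 := (hFmeas.1 a).2 ω hω
    rw [abs_sub_le_iff]
    exact ⟨by linarith [h3.1], by linarith [h3.2]⟩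
  have hbddG : ∀ (b : B), ∀ ω ∈ Ω, |⟪margG m b, ω⟫ - ⟪g b, ω⟫| ≤ 1 := by
    intro b ω hω
    have h1 := hmargG0 b ω hω
    have h2 := hmargG1 b ω hω
    have h3 := (hGmeas.1 b).2 ω hω
    rw [abs_sub_le_iff]
    exact ⟨by linarith [h3.1], by linarith [h3.2]⟩
  have hDfge : ∀ {ω : V}, ω ∈ Ω → ∀ a : A, ⟪f a, ω⟫ - ⟪margF m a, ω⟫ ≤ Df :=
    fun hω a => dInfty_ge' hbddF hω a
  have hDgge : ∀ {ω : V}, ω ∈ Ω → ∀ b : B, ⟪g b, ω⟫ - ⟪margG m b, ω⟫ ≤ Dg :=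
    fun hω b => dInfty_ge' hbddG hω b
  have hsharpF : ∀ a, ⟪f a, f a⟫ = ⟪ωM, f a⟫ := by
    intro a
    obtain ⟨S, hS, hcase⟩ := hSF a
    exact ideal_sharp' hsd hωMΩ hωMunit hcF hnormF ((hFmeas.1 a).2) hS hcase
  have hsharpG : ∀ b, ⟪g b, g b⟫ = ⟪ωM, g b⟫ := by
    intro b
    obtain ⟨S, hS, hcase⟩ := hSG b
    exact ideal_sharp' hsd hωMΩ hωMunit hcG hnormG ((hGmeas.1 b).2) hS hcase
  have hsumF : ∑ a, ⟪ωM, f a⟫ = 1 := by rw [← inner_sum, hFmeas.2, hMM]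
  have hsumG : ∑ b, ⟪ωM, g b⟫ = 1 := by rw [← inner_sum, hGmeas.2, hMM]
  have haccF : 1 - Df ≤ ∑ a, ⟪f a, margF m a⟫ := by
    have step : ∀ a : A, ⟪ωM, f a⟫ - ⟪ωM, f a⟫ * Df ≤ ⟪f a, margF m a⟫ := by
      intro a
      obtain ⟨σ, hσ, hl0, hfa⟩ :=
        effect_decomp' hsd hωMunit (fun ω hω => ((hFmeas.1 a).2 ω hω).1)
      set l := ⟪ωM, f a⟫ with hldef
      have hD : ⟪f a, σ⟫ - ⟪margF m a, σ⟫ ≤ Df := hDfge hσ a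
      have h1 : ⟪f a, f a⟫ - ⟪f a, margF m a⟫ = l * (⟪f a, σ⟫ - ⟪margF m a, σ⟫) := by
        rw [hfa]
        simp only [real_inner_smul_left, real_inner_smul_right,
          real_inner_comm (margF m a) σ]
        ring
      have h2 := hsharpF a
      rw [← hldef] at h2
      have h3 : l * (⟪f a, σ⟫ - ⟪margF m a, σ⟫) ≤ l * Df := mul_le_mul_of_nonneg_left hD hl0
      linarith
    calc 1 - Df = ∑ a, (⟪ωM, f a⟫ - ⟪ωM, f a⟫ * Df) := by
          rw [Finset.sum_sub_distrib, ← Finset.sum_mul, hsumF]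
          ring
    _ ≤ ∑ a, ⟪f a, margF m a⟫ := Finset.sum_le_sum fun a _ => step a
  have haccG : 1 - Dg ≤ ∑ b, ⟪g b, margG m b⟫ := by
    have step : ∀ b : B, ⟪ωM, g b⟫ - ⟪ωM, g b⟫ * Dg ≤ ⟪g b, margG m b⟫ := by
      intro b
      obtain ⟨σ, hσ, hl0, hgb⟩ :=
        effect_decomp' hsd hωMunit (fun ω hω => ((hGmeas.1 b).2 ω hω).1)
      set l := ⟪ωM, g b⟫ with hldef
      have hD : ⟪g b, σ⟫ - ⟪margG m b, σ⟫ ≤ Dg := hDgge hσ b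
      have h1 : ⟪g b, g b⟫ - ⟪g b, margG m b⟫ = l * (⟪g b, σ⟫ - ⟪margG m b, σ⟫) := by
        rw [hgb]
        simp only [real_inner_smul_left, real_inner_smul_right,
          real_inner_comm (margG m b) σ]
        ring
      have h2 := hsharpG b
      rw [← hldef] at h2
      have h3 : l * (⟪g b, σ⟫ - ⟪margG m b, σ⟫) ≤ l * Dg := mul_le_mul_of_nonneg_left hD hl0
      linarith
    calc 1 - Dg = ∑ b, (⟪ωM, g b⟫ - ⟪ωM, g b⟫ * Dg) := by
          rw [Finset.sum_sub_distrib, ← Finset.sum_mul, hsumG]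
          ring
    _ ≤ ∑ b, ⟪g b, margG m b⟫ := Finset.sum_le_sum fun b _ => step b
  set K := 2 - Df - Dg with hK
  have hmain : (0:ℝ) ≤ ∑ p : A × B, (⟪f p.1 + g p.2, m p⟫ - K * ⟪ωM, m p⟫) := by
    have e1 : ∑ p : A × B, ⟪f p.1, m p⟫ = ∑ a, ⟪f a, margF m a⟫ := by
      rw [Fintype.sum_prod_type (f := fun p : A × B => ⟪f p.1, m p⟫)]
      exact Finset.sum_congr rfl fun a _ => by rw [margF, inner_sum]
    have e2 : ∑ p : A × B, ⟪g p.2, m p⟫ = ∑ b, ⟪g b, margG m b⟫ := by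
      rw [Fintype.sum_prod_type_right (f := fun p : A × B => ⟪g p.2, m p⟫)]
      exact Finset.sum_congr rfl fun b _ => by rw [margG, inner_sum]
    have e3 : ∑ p : A × B, ⟪ωM, m p⟫ = 1 := by rw [← inner_sum, hM.2, hMM]
    have expand : ∑ p : A × B, (⟪f p.1 + g p.2, m p⟫ - K * ⟪ωM, m p⟫)
        = ∑ a, ⟪f a, margF m a⟫ + ∑ b, ⟪g b, margG m b⟫ - K := by
      rw [Finset.sum_congr rfl fun (p : A × B) _ =>
        (by rw [inner_add_left] :
          ⟪f p.1 + g p.2, m p⟫ - K * ⟪ωM, m p⟫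
            = ⟪f p.1, m p⟫ + ⟪g p.2, m p⟫ - K * ⟪ωM, m p⟫)]
      rw [Finset.sum_sub_distrib, Finset.sum_add_distrib, ← Finset.mul_sum, e1, e2, e3,
        mul_one]
    rw [expand, hK]
    linarith
  have hex : ∃ p : A × B, K * ⟪ωM, m p⟫ ≤ ⟪f p.1 + g p.2, m p⟫ := by
    by_contra hcon
    push_neg at hcon
    have hlt : ∑ p : A × B, (⟪f p.1 + g p.2, m p⟫ - K * ⟪ωM, m p⟫)
        < ∑ _p : A × B, (0:ℝ) :=
      Finset.sum_lt_sum_of_nonempty Finset.univ_nonempty fun p _ => sub_neg.mpr (hcon p)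
    rw [Finset.sum_const, smul_zero] at hlt
    linarith
  obtain ⟨⟨a, b⟩, hab⟩ := hex
  obtain ⟨σ, hσ, hl0, hmab⟩ := effect_decomp' hsd hωMunit (fun ω hω => hm0 (a, b) ω hω)
  set l := ⟪ωM, m (a, b)⟫ with hldef
  have hlpos : 0 < l := by
    rcases hl0.lt_or_eq with h | h
    · exact h
    · exact absurd (by rw [hmab, ← h, zero_smul]) (hM.1 (a, b)).1
  have hσK : K ≤ ⟪f a, σ⟫ + ⟪g b, σ⟫ := by
    have h1 : K * l ≤ l * ⟪f a + g b, σ⟫ := by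
      calc K * l ≤ ⟪f a + g b, m (a, b)⟫ := hab
      _ = l * ⟪f a + g b, σ⟫ := by rw [hmab, real_inner_smul_right]
    have h2 : K ≤ ⟪f a + g b, σ⟫ :=
      (mul_le_mul_iff_right₀ hlpos).mp (by linarith)
    rwa [inner_add_left] at h2
  refine ⟨σ, hσ, ?_⟩
  have hfa : ⟪f a, σ⟫ ≤ Finset.univ.sup' Finset.univ_nonempty (fun a => ⟪f a, σ⟫) :=
    Finset.le_sup' (fun a => ⟪f a, σ⟫) (Finset.mem_univ a)
  have hgb : ⟪g b, σ⟫ ≤ Finset.univ.sup' Finset.univ_nonempty (fun b => ⟪g b, σ⟫) :=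
    Finset.le_sup' (fun b => ⟪g b, σ⟫) (Finset.mem_univ b)
  rw [locError, locError]
  linarith
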